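/- Let K be an idempotent semifield and let G be a totally ordered abelian group structure underlying K^× (equivalently, K is a semifield with a + a = a). For any commutative monoid M, the unit group of the monoid semiring K[M] is isomorphic to K^× × M^×; explicitly, every unit of K[M] is a nonzero scalar multiple of a single invertible monomial. -/

import Mathlib

/-- Let `K` be an idempotent semifield and `M` a commutative monoid.
Then the unit group of the monoid semiring `K[M]` is isomorphic to `K^× × M^×`;
explicitly, every unit of `K[M]` is a nonzero scalar multiple of a single invertible
monomial. -/
theorem units_monoidAlgebra_idem_semifield {K M : Type*} [Semifield K] [CommMonoid M]
    (hidem : ∀ a : K, a + a = a) :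
    (∀ u : (MonoidAlgebra K M)ˣ, ∃ (c : Kˣ) (m : Mˣ),
      u.val = MonoidAlgebra.single (m : M) (c : K)) ∧
    Nonempty (Kˣ × Mˣ ≃* (MonoidAlgebra K M)ˣ) := by
  classical
  -- K is zerosumfree
  have zsf : ∀ a b : K, a + b = 0 → a = 0 := by
    intro a b h
    by_contra ha
    have h1 : (1 : K) + b * a⁻¹ = 0 := by
      have := congrArg (· * a⁻¹) h
      simpa [add_mul, mul_inv_cancel₀ ha] using this
    have h2 : (1 : K) + b * a⁻¹ + b * a⁻¹ = b * a⁻¹ := by rw [h1, zero_add]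
    rw [add_assoc, hidem] at h2
    have hc : b * a⁻¹ = 0 := h2.symm.trans h1
    rw [hc, add_zero] at h1
    exact one_ne_zero h1
  have sum_mem_zero : ∀ {ι : Type _} (s : Finset ι) (f : ι → K), ∀ i ∈ s,
      (∑ j ∈ s, f j) = 0 → f i = 0 := by
    intro ι s f i hi hsum
    rw [← Finset.add_sum_erase s f hi] at hsum
    exact zsf _ _ hsum
  have key : ∀ (f g : MonoidAlgebra K M) (a b : M), f.coeff a ≠ 0 → g.coeff b ≠ 0 →
      (f * g).coeff (a * b) ≠ 0 := by
    intro f g a b hfa hgb h0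
    rw [MonoidAlgebra.coeff_mul] at h0
    have h1 := sum_mem_zero f.coeff.support _ a (Finsupp.mem_support_iff.2 hfa) h0
    have h2 := sum_mem_zero g.coeff.support _ b (Finsupp.mem_support_iff.2 hgb) h1
    simp only [if_pos] at h2
    exact mul_ne_zero hfa hgb h2
  have main : ∀ u : (MonoidAlgebra K M)ˣ, ∃ (c : Kˣ) (m : Mˣ),
      u.val = MonoidAlgebra.single (m : M) (c : K) := by
    intro u
    set f : MonoidAlgebra K M := u.val with hf
    set g : MonoidAlgebra K M := ↑u⁻¹ with hg
    have hfg : f * g = 1 := u.mul_inv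
    have hmem1 : ∀ a b : M, f.coeff a ≠ 0 → g.coeff b ≠ 0 → a * b = 1 := by
      intro a b ha hb
      have hk := key f g a b ha hb
      rw [hfg] at hk
      by_contra hne
      exact hk (by rw [MonoidAlgebra.one_def, MonoidAlgebra.coeff_single]; exact Finsupp.single_eq_of_ne' (Ne.symm hne))
    have hfne : f ≠ 0 := by
      intro h0
      rw [h0, zero_mul] at hfg
      have : ((1 : MonoidAlgebra K M)).coeff 1 = 0 := by rw [← hfg]; rfl
      rw [MonoidAlgebra.one_def, MonoidAlgebra.coeff_single, Finsupp.single_eq_same] at this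
      exact one_ne_zero this
    have hgne : g ≠ 0 := by
      intro h0
      rw [h0, mul_zero] at hfg
      have : ((1 : MonoidAlgebra K M)).coeff 1 = 0 := by rw [← hfg]; rfl
      rw [MonoidAlgebra.one_def, MonoidAlgebra.coeff_single, Finsupp.single_eq_same] at this
      exact one_ne_zero this
    obtain ⟨a, ha⟩ := Finsupp.support_nonempty_iff.2 (mt MonoidAlgebra.coeff_eq_zero.1 hfne)
    obtain ⟨b, hb⟩ := Finsupp.support_nonempty_iff.2 (mt MonoidAlgebra.coeff_eq_zero.1 hgne)
    have ha' : f.coeff a ≠ 0 := Finsupp.mem_support_iff.1 ha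
    have hb' : g.coeff b ≠ 0 := Finsupp.mem_support_iff.1 hb
    have hab : a * b = 1 := hmem1 a b ha' hb'
    have hba : b * a = 1 := by rw [mul_comm]; exact hab
    -- f is a single
    have hfs : f = MonoidAlgebra.single a (f.coeff a) := by
      ext x
      by_cases hx : x = a
      · subst hx; rw [MonoidAlgebra.coeff_single, Finsupp.single_eq_same]
      · rw [MonoidAlgebra.coeff_single, Finsupp.single_eq_of_ne' (Ne.symm hx)]
        by_contra hfx
        have hx1 : x * b = 1 := hmem1 x b hfx hb'
        apply hx
        calc x = x * (b * a) := by rw [hba, mul_one]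
        _ = (x * b) * a := by rw [mul_assoc]
        _ = a := by rw [hx1, one_mul]
    have hgs : g = MonoidAlgebra.single b (g.coeff b) := by
      ext x
      by_cases hx : x = b
      · subst hx; rw [MonoidAlgebra.coeff_single, Finsupp.single_eq_same]
      · rw [MonoidAlgebra.coeff_single, Finsupp.single_eq_of_ne' (Ne.symm hx)]
        by_contra hgx
        have hx1 : a * x = 1 := hmem1 a x ha' hgx
        apply hx
        calc x = (b * a) * x := by rw [hba, one_mul]
        _ = b * (a * x) := by rw [mul_assoc]
        _ = b := by rw [hx1, mul_one]
    have hcc : f.coeff a * g.coeff b = 1 := by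
      have h1 : MonoidAlgebra.single (a * b) (f.coeff a * g.coeff b) = (1 : MonoidAlgebra K M) := by
        rw [← MonoidAlgebra.single_mul_single, ← hfs, ← hgs, hfg]
      rw [hab, MonoidAlgebra.one_def] at h1
      exact MonoidAlgebra.single_right_inj.1 h1
    exact ⟨⟨f.coeff a, g.coeff b, hcc, by rw [mul_comm]; exact hcc⟩, ⟨a, b, hab, hba⟩, hfs⟩
  refine ⟨main, ⟨?_⟩⟩
  let φ : Kˣ × Mˣ →* (MonoidAlgebra K M)ˣ :=
  { toFun := fun p => ⟨MonoidAlgebra.single (p.2 : M) (p.1 : K),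
      MonoidAlgebra.single ((p.2⁻¹ : Mˣ) : M) ((p.1⁻¹ : Kˣ) : K),
      by rw [MonoidAlgebra.single_mul_single]; simp [MonoidAlgebra.one_def],
      by rw [MonoidAlgebra.single_mul_single]; simp [MonoidAlgebra.one_def]⟩,
    map_one' := by ext; simp [MonoidAlgebra.one_def],
    map_mul' := by intro p q; ext; simp [MonoidAlgebra.single_mul_single] }
  refine MulEquiv.ofBijective φ ⟨?_, ?_⟩
  · intro p q h
    have h1 : MonoidAlgebra.single (p.2 : M) (p.1 : K)
        = MonoidAlgebra.single (q.2 : M) (q.1 : K) := congrArg Units.val h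
    rcases MonoidAlgebra.single_inj.1 h1 with ⟨hm, hc⟩ | ⟨hc, _⟩
    · exact Prod.ext (Units.ext hc) (Units.ext hm)
    · exact absurd hc p.1.ne_zero
  · intro u
    obtain ⟨c, m, hu⟩ := main u
    exact ⟨(c, m), Units.ext hu.symm⟩
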